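/- (Theorem on class separation, part 1.) Let (X̂, 𝒜) be a nonempty measurable space with a σ-finite measure ν. Let q_y, q_{y'}, b : X̂ → ℝ be nonnegative measurable probability densities with respect to ν (each integrating to 1), and let λ : X̂ → ℝ be measurable with 0 ≤ λ(x̂) ≤ 1 for all x̂, with ∫ λ·b dν < 1 and ∫ λ·q_y dν < 1 and ∫ λ·q_{y'} dν < 1. For each class c ∈ {y, y'}, set η_c = (1 - ∫ λ·q_c dν)/(1 - ∫ λ·b dν) and define the mixture density p_c(x̂) = λ(x̂)·q_c(x̂) + η_c·(1-λ(x̂))·b(x̂), and let D_c be the measure with density p_c with respect to ν (a probability measure). Let Q_c be the measure with density q_c with respect to ν. Then d_TV(D_y, D_{y'}) ≥ (inf_{x̂ ∈ X̂} λ(x̂)) · d_TV(Q_y, Q_{y'}). -/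

import Mathlib

open MeasureTheory

lemma tvaux_toReal_withDensity {Xh : Type*} [MeasurableSpace Xh] (ν : Measure Xh)
    (f : Xh → ℝ) (hf : ∀ x, 0 ≤ f x) (hfint : Integrable f ν)
    (Γ : Set Xh) (hΓ : MeasurableSet Γ) :
    ((ν.withDensity (fun x => ENNReal.ofReal (f x))) Γ).toReal = ∫ x in Γ, f x ∂ν := by
  rw [withDensity_apply _ hΓ,
    ← ofReal_integral_eq_lintegral_ofReal hfint.integrableOn (ae_of_all _ hf),
    ENNReal.toReal_ofReal (setIntegral_nonneg hΓ fun x _ => hf x)]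

/-- Total variation distance between two measures:
the supremum over measurable sets of the absolute difference of their masses. -/
noncomputable def dTV {Ω : Type*} [MeasurableSpace Ω] (D₁ D₂ : Measure Ω) : ℝ :=
  sSup {r | ∃ Γ : Set Ω, MeasurableSet Γ ∧ r = |(D₁ Γ).toReal - (D₂ Γ).toReal|}

theorem class_separation_part1
    (Xh : Type*) [MeasurableSpace Xh] [Nonempty Xh]
    (ν : Measure Xh) [SigmaFinite ν]
    (qy qy' b : Xh → ℝ)
    (hqy_nonneg : ∀ x, 0 ≤ qy x) (hqy'_nonneg : ∀ x, 0 ≤ qy' x)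
    (hb_nonneg : ∀ x, 0 ≤ b x)
    (hqy_meas : Measurable qy) (hqy'_meas : Measurable qy') (hb_meas : Measurable b)
    (hqy_int : ∫ x, qy x ∂ν = 1) (hqy'_int : ∫ x, qy' x ∂ν = 1)
    (hb_int : ∫ x, b x ∂ν = 1)
    (lam : Xh → ℝ) (hlam_meas : Measurable lam)
    (hlam_bounds : ∀ x, 0 ≤ lam x ∧ lam x ≤ 1)
    (hlb : ∫ x, lam x * b x ∂ν < 1)
    (hly : ∫ x, lam x * qy x ∂ν < 1) (hly' : ∫ x, lam x * qy' x ∂ν < 1)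
    (ηy ηy' : ℝ)
    (hηy : ηy = (1 - ∫ x, lam x * qy x ∂ν) / (1 - ∫ x, lam x * b x ∂ν))
    (hηy' : ηy' = (1 - ∫ x, lam x * qy' x ∂ν) / (1 - ∫ x, lam x * b x ∂ν))
    (py py' : Xh → ℝ)
    (hpy : ∀ x, py x = lam x * qy x + ηy * (1 - lam x) * b x)
    (hpy' : ∀ x, py' x = lam x * qy' x + ηy' * (1 - lam x) * b x)
    (Dy Dy' Qy Qy' : Measure Xh)
    (hDy : Dy = ν.withDensity (fun x => ENNReal.ofReal (py x)))
    (hDy' : Dy' = ν.withDensity (fun x => ENNReal.ofReal (py' x)))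
    (hDyprob : IsProbabilityMeasure Dy) (hDy'prob : IsProbabilityMeasure Dy')
    (hQy : Qy = ν.withDensity (fun x => ENNReal.ofReal (qy x)))
    (hQy' : Qy' = ν.withDensity (fun x => ENNReal.ofReal (qy' x))) :
    (⨅ x : Xh, lam x) * dTV Qy Qy' ≤ dTV Dy Dy' := by
  classical
  set m : ℝ := ⨅ x : Xh, lam x with hm
  have hbdd : BddBelow (Set.range lam) := ⟨0, fun r ⟨x, hx⟩ => hx ▸ (hlam_bounds x).1⟩
  have hm0 : 0 ≤ m := le_ciInf fun x => (hlam_bounds x).1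
  have hm_le : ∀ x, m ≤ lam x := fun x => ciInf_le hbdd x
  -- integrability
  have hint_qy : Integrable qy ν := by
    by_contra h; rw [integral_undef h] at hqy_int; norm_num at hqy_int
  have hint_qy' : Integrable qy' ν := by
    by_contra h; rw [integral_undef h] at hqy'_int; norm_num at hqy'_int
  have hint_b : Integrable b ν := by
    by_contra h; rw [integral_undef h] at hb_int; norm_num at hb_int
  have hint_lqy : Integrable (fun x => lam x * qy x) ν := by
    refine hint_qy.mono' (hlam_meas.mul hqy_meas).aestronglyMeasurable (ae_of_all _ fun x => ?_)
    rw [Real.norm_eq_abs, abs_of_nonneg (mul_nonneg (hlam_bounds x).1 (hqy_nonneg x))]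
    exact mul_le_of_le_one_left (hqy_nonneg x) (hlam_bounds x).2
  have hint_lqy' : Integrable (fun x => lam x * qy' x) ν := by
    refine hint_qy'.mono' (hlam_meas.mul hqy'_meas).aestronglyMeasurable (ae_of_all _ fun x => ?_)
    rw [Real.norm_eq_abs, abs_of_nonneg (mul_nonneg (hlam_bounds x).1 (hqy'_nonneg x))]
    exact mul_le_of_le_one_left (hqy'_nonneg x) (hlam_bounds x).2
  have hint_1lb : Integrable (fun x => (1 - lam x) * b x) ν := by
    refine hint_b.mono' ((measurable_const.sub hlam_meas).mul hb_meas).aestronglyMeasurable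
      (ae_of_all _ fun x => ?_)
    rw [Real.norm_eq_abs, abs_of_nonneg (mul_nonneg (by linarith [(hlam_bounds x).2]) (hb_nonneg x))]
    exact mul_le_of_le_one_left (hb_nonneg x) (by linarith [(hlam_bounds x).1])
  have hint_ldiff : Integrable (fun x => lam x * (qy x - qy' x)) ν := by
    have := hint_lqy.sub hint_lqy'
    exact this.congr (ae_of_all _ fun x => by simp only [Pi.sub_apply]; ring)
  have hint_diff : Integrable (fun x => qy x - qy' x) ν := hint_qy.sub hint_qy'
  -- positivity of η
  have hden : (0:ℝ) < 1 - ∫ x, lam x * b x ∂ν := by linarith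
  have hηy_nonneg : 0 ≤ ηy := by rw [hηy]; exact div_nonneg (by linarith) hden.le
  have hηy'_nonneg : 0 ≤ ηy' := by rw [hηy']; exact div_nonneg (by linarith) hden.le
  have hpy_eq : py = fun x => lam x * qy x + ηy * ((1 - lam x) * b x) :=
    funext fun x => by rw [hpy x]; ring
  have hpy'_eq : py' = fun x => lam x * qy' x + ηy' * ((1 - lam x) * b x) :=
    funext fun x => by rw [hpy' x]; ring
  have hint_py : Integrable py ν := by
    rw [hpy_eq]; exact hint_lqy.add (hint_1lb.const_mul ηy)
  have hint_py' : Integrable py' ν := by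
    rw [hpy'_eq]; exact hint_lqy'.add (hint_1lb.const_mul ηy')
  have hpy_nonneg : ∀ x, 0 ≤ py x := fun x => by
    rw [hpy x]
    exact add_nonneg (mul_nonneg (hlam_bounds x).1 (hqy_nonneg x))
      (mul_nonneg (mul_nonneg hηy_nonneg (by linarith [(hlam_bounds x).2])) (hb_nonneg x))
  have hpy'_nonneg : ∀ x, 0 ≤ py' x := fun x => by
    rw [hpy' x]
    exact add_nonneg (mul_nonneg (hlam_bounds x).1 (hqy'_nonneg x))
      (mul_nonneg (mul_nonneg hηy'_nonneg (by linarith [(hlam_bounds x).2])) (hb_nonneg x))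
  -- the optimal set
  set Γ : Set Xh := {x | qy' x ≤ qy x} with hΓdef
  have hΓ : MeasurableSet Γ := measurableSet_le hqy'_meas hqy_meas
  set S : ℝ := ∫ x in Γ, (qy x - qy' x) ∂ν with hSdef
  have hS0 : 0 ≤ S := setIntegral_nonneg hΓ fun x hx => by simpa [hΓdef, sub_nonneg] using hx
  have htotdiff : ∫ x, (qy x - qy' x) ∂ν = 0 := by
    rw [integral_sub hint_qy hint_qy', hqy_int, hqy'_int]; ring
  have hScompl : ∫ x in Γᶜ, (qy x - qy' x) ∂ν = -S := by
    have h := integral_add_compl hΓ hint_diff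
    rw [htotdiff] at h; linarith [h]
  -- dTV Qy Qy' ≤ S
  have hQle : dTV Qy Qy' ≤ S := by
    apply Real.sSup_le _ hS0
    rintro r ⟨Γ', hΓ', rfl⟩
    rw [hQy, hQy',
      tvaux_toReal_withDensity ν qy hqy_nonneg hint_qy Γ' hΓ',
      tvaux_toReal_withDensity ν qy' hqy'_nonneg hint_qy' Γ' hΓ',
      ← integral_sub hint_qy.integrableOn hint_qy'.integrableOn]
    have hsplit : (∫ x in Γ' ∩ Γ, (qy x - qy' x) ∂ν) + ∫ x in Γ' \ Γ, (qy x - qy' x) ∂ν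
        = ∫ x in Γ', (qy x - qy' x) ∂ν := integral_inter_add_diff hΓ hint_diff.integrableOn
    have h1 : ∫ x in Γ' ∩ Γ, (qy x - qy' x) ∂ν ≤ S := by
      refine setIntegral_mono_set hint_diff.integrableOn ?_ (HasSubset.Subset.eventuallyLE Set.inter_subset_right)
      exact (ae_restrict_iff' hΓ).2 (ae_of_all _ fun x hx => by simpa [hΓdef, sub_nonneg] using hx)
    have h2 : ∫ x in Γ' ∩ Γ, (qy x - qy' x) ∂ν ≥ 0 :=
      setIntegral_nonneg (hΓ'.inter hΓ) fun x hx => by simpa [hΓdef, sub_nonneg] using hx.2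
    have h3 : ∫ x in Γ' \ Γ, (qy x - qy' x) ∂ν ≤ 0 := by
      refine setIntegral_nonpos (hΓ'.diff hΓ) fun x hx => ?_
      have : qy x < qy' x := by simpa [hΓdef, not_le] using hx.2
      linarith
    have h4 : -S ≤ ∫ x in Γ' \ Γ, (qy x - qy' x) ∂ν := by
      rw [← hScompl]
      have : ∫ x in Γ' \ Γ, (qy' x - qy x) ∂ν ≤ ∫ x in Γᶜ, (qy' x - qy x) ∂ν := by
        refine setIntegral_mono_set (hint_qy'.sub hint_qy).integrableOn ?_
          (HasSubset.Subset.eventuallyLE (fun x hx => hx.2))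
        refine (ae_restrict_iff' hΓ.compl).2 (ae_of_all _ fun x hx => ?_)
        have : qy x < qy' x := by simpa [hΓdef, not_le] using hx
        simp only [Pi.zero_apply]; linarith
      have e1 : ∫ x in Γ' \ Γ, (qy' x - qy x) ∂ν = -∫ x in Γ' \ Γ, (qy x - qy' x) ∂ν := by
        rw [← integral_neg]; congr 1; ext x; ring
      have e2 : ∫ x in Γᶜ, (qy' x - qy x) ∂ν = -∫ x in Γᶜ, (qy x - qy' x) ∂ν := by
        rw [← integral_neg]; congr 1; ext x; ring
      rw [e1, e2] at this; linarith
    rw [abs_le]; constructor <;> linarith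
  -- difference of D measures on a measurable set
  have hsplitD : ∀ s : Set Xh, MeasurableSet s →
      (Dy s).toReal - (Dy' s).toReal =
        (∫ x in s, lam x * (qy x - qy' x) ∂ν) + (ηy - ηy') * ∫ x in s, (1 - lam x) * b x ∂ν := by
    intro s hs
    rw [hDy, hDy', tvaux_toReal_withDensity ν py hpy_nonneg hint_py s hs,
      tvaux_toReal_withDensity ν py' hpy'_nonneg hint_py' s hs]
    have e1 : ∫ x in s, py x ∂ν
        = (∫ x in s, lam x * qy x ∂ν) + ηy * ∫ x in s, (1 - lam x) * b x ∂ν := by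
      rw [hpy_eq, integral_add hint_lqy.integrableOn (hint_1lb.integrableOn.const_mul ηy),
        integral_const_mul]
    have e2 : ∫ x in s, py' x ∂ν
        = (∫ x in s, lam x * qy' x ∂ν) + ηy' * ∫ x in s, (1 - lam x) * b x ∂ν := by
      rw [hpy'_eq, integral_add hint_lqy'.integrableOn (hint_1lb.integrableOn.const_mul ηy'),
        integral_const_mul]
    have e3 : ∫ x in s, lam x * (qy x - qy' x) ∂ν
        = (∫ x in s, lam x * qy x ∂ν) - ∫ x in s, lam x * qy' x ∂ν := by
      rw [← integral_sub hint_lqy.integrableOn hint_lqy'.integrableOn]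
      congr 1; ext x; ring
    rw [e1, e2, e3]; ring
  -- total is zero
  have htotD : (∫ x, lam x * (qy x - qy' x) ∂ν) + (ηy - ηy') * ∫ x, (1 - lam x) * b x ∂ν = 0 := by
    have h := hsplitD Set.univ MeasurableSet.univ
    simp only [Measure.restrict_univ] at h
    rw [← h]
    simp [measure_univ]
  set A : ℝ := ∫ x in Γ, lam x * (qy x - qy' x) ∂ν with hA
  set B : ℝ := ∫ x in Γ, (1 - lam x) * b x ∂ν with hB
  set A' : ℝ := ∫ x in Γᶜ, lam x * (qy x - qy' x) ∂ν with hA'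
  set B' : ℝ := ∫ x in Γᶜ, (1 - lam x) * b x ∂ν with hB'
  have hAc : A + A' = ∫ x, lam x * (qy x - qy' x) ∂ν := integral_add_compl hΓ hint_ldiff
  have hBc : B + B' = ∫ x, (1 - lam x) * b x ∂ν := integral_add_compl hΓ hint_1lb
  have hzero : (A + (ηy - ηy') * B) + (A' + (ηy - ηy') * B') = 0 := by
    have : (A + (ηy - ηy') * B) + (A' + (ηy - ηy') * B')
        = (A + A') + (ηy - ηy') * (B + B') := by ring
    rw [this, hAc, hBc]; exact htotD
  have hB0 : 0 ≤ B := setIntegral_nonneg hΓ fun x _ =>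
    mul_nonneg (by linarith [(hlam_bounds x).2]) (hb_nonneg x)
  have hB'0 : 0 ≤ B' := setIntegral_nonneg hΓ.compl fun x _ =>
    mul_nonneg (by linarith [(hlam_bounds x).2]) (hb_nonneg x)
  have hA_ge : m * S ≤ A := by
    have : ∫ x in Γ, m * (qy x - qy' x) ∂ν ≤ A := by
      refine setIntegral_mono_on (hint_diff.integrableOn.const_mul m) hint_ldiff.integrableOn hΓ
        fun x hx => ?_
      exact mul_le_mul_of_nonneg_right (hm_le x) (by simpa [hΓdef, sub_nonneg] using hx)
    rwa [integral_const_mul] at this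
  have hA'_le : A' ≤ -(m * S) := by
    have : A' ≤ ∫ x in Γᶜ, m * (qy x - qy' x) ∂ν := by
      refine setIntegral_mono_on hint_ldiff.integrableOn (hint_diff.integrableOn.const_mul m) hΓ.compl
        fun x hx => ?_
      have hneg : qy x - qy' x ≤ 0 := by
        have : qy x < qy' x := by simpa [hΓdef, not_le] using hx
        linarith
      exact mul_le_mul_of_nonpos_right (hm_le x) hneg
    rwa [integral_const_mul, hScompl, mul_neg] at this
  -- lower bound on |Dy Γ - Dy' Γ|
  have hkey : m * S ≤ |(Dy Γ).toReal - (Dy' Γ).toReal| := by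
    rw [hsplitD Γ hΓ, ← hA, ← hB]
    rcases le_or_gt 0 (ηy - ηy') with hδ | hδ
    · have : m * S ≤ A + (ηy - ηy') * B := by nlinarith
      exact this.trans (le_abs_self _)
    · have h1 : A + (ηy - ηy') * B = -(A' + (ηy - ηy') * B') := by linarith
      have h2 : A' + (ηy - ηy') * B' ≤ -(m * S) := by nlinarith
      calc m * S ≤ -(A' + (ηy - ηy') * B') := by linarith
        _ = A + (ηy - ηy') * B := h1.symm
        _ ≤ |A + (ηy - ηy') * B| := le_abs_self _
  -- dTV Dy Dy' ≥ m * S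
  have hDbdd : BddAbove {r | ∃ Γ' : Set Xh, MeasurableSet Γ' ∧
      r = |(Dy Γ').toReal - (Dy' Γ').toReal|} := by
    refine ⟨1, ?_⟩
    rintro r ⟨Γ', hΓ', rfl⟩
    have h1 : (Dy Γ').toReal ≤ 1 := by
      have := prob_le_one (μ := Dy) (s := Γ')
      simpa using ENNReal.toReal_mono (by norm_num) this
    have h2 : (Dy' Γ').toReal ≤ 1 := by
      have := prob_le_one (μ := Dy') (s := Γ')
      simpa using ENNReal.toReal_mono (by norm_num) this
    have h3 : 0 ≤ (Dy Γ').toReal := ENNReal.toReal_nonneg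
    have h4 : 0 ≤ (Dy' Γ').toReal := ENNReal.toReal_nonneg
    rw [abs_le]; constructor <;> linarith
  have hDge : m * S ≤ dTV Dy Dy' :=
    hkey.trans (le_csSup hDbdd ⟨Γ, hΓ, rfl⟩)
  calc m * dTV Qy Qy' ≤ m * S := mul_le_mul_of_nonneg_left hQle hm0
    _ ≤ dTV Dy Dy' := hDge
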